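/- Let n be a sequence with l-bounded gaps and B a semi-normalized Schauder basis with basis constant K. If B has the n-UL property with constants C₁, C₂ (i.e. C₁⁻¹ min_{i∈A}|a_i|·‖1_A‖ ≤ ‖Σ_{i∈A} a_i e_i‖ ≤ C₂ max_{i∈A}|a_i|·‖1_A‖ for all A with |A| ∈ n), then B has the UL property for all finite sets A, with constants C₁' ≤ max{n₁α₁α₂, K²C₁ + 2(l−1)C₁K} and C₂' ≤ max{n₁α₁α₂, K²C₂ + 2(l−1)C₂K}. -/

import Mathlib

open Finset

section Aux

variable {X : Type*} [NormedAddCommGroup X] [NormedSpace ℝ X]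

/-- Coordinate functional applied to a finite combination. -/
lemma stmt1_coef (e : ℕ → X) (f : ℕ → X →L[ℝ] ℝ)
    (hbi : ∀ i j, f i (e j) = if i = j then (1 : ℝ) else 0)
    (B : Finset ℕ) (b : ℕ → ℝ) (i : ℕ) :
    f i (∑ j ∈ B, b j • e j) = if i ∈ B then b i else 0 := by
  have h1 : ∀ j ∈ B, f i (b j • e j) = if i = j then b j else 0 := by
    intro j _
    rw [map_smul, hbi]
    by_cases h : i = j <;> simp [h]
  rw [map_sum, Finset.sum_congr rfl h1, Finset.sum_ite_eq]

/-- Partial-sum projection identity. -/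
lemma stmt1_proj (e : ℕ → X) (f : ℕ → X →L[ℝ] ℝ)
    (hbi : ∀ i j, f i (e j) = if i = j then (1 : ℝ) else 0)
    (B : Finset ℕ) (b : ℕ → ℝ) (m : ℕ) :
    ∑ i ∈ Finset.range m, f i (∑ j ∈ B, b j • e j) • e i
      = ∑ i ∈ B.filter (· < m), b i • e i := by
  calc ∑ i ∈ Finset.range m, f i (∑ j ∈ B, b j • e j) • e i
      = ∑ i ∈ Finset.range m, (if i ∈ B then b i • e i else 0) := by
        refine Finset.sum_congr rfl fun i _ => ?_
        rw [stmt1_coef e f hbi]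
        by_cases h : i ∈ B <;> simp [h]
    _ = ∑ i ∈ (Finset.range m).filter (· ∈ B), b i • e i := (Finset.sum_filter _ _).symm
    _ = ∑ i ∈ B.filter (· < m), b i • e i := by
        refine Finset.sum_congr ?_ fun _ _ => rfl
        ext i
        simp only [Finset.mem_filter, Finset.mem_range]
        tauto

/-- Existence of a cut threshold realizing any cardinality `p ≤ B.card`. -/
lemma stmt1_cut (B : Finset ℕ) : ∀ p, p ≤ B.card → ∃ c, (B.filter (· < c)).card = p := by
  intro p
  induction p with
  | zero => intro _; exact ⟨0, by simp⟩
  | succ p ih =>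
    intro hp
    obtain ⟨c, hc⟩ := ih (Nat.le_of_succ_le hp)
    have hcards := Finset.card_filter_add_card_filter_not (s := B) (p := (· < c))
    have hBne : (B.filter (fun i => ¬ i < c)).Nonempty := by
      rw [← Finset.card_pos]
      omega
    set w := (B.filter (fun i => ¬ i < c)).min' hBne with hw
    have hwmem := (B.filter (fun i => ¬ i < c)).min'_mem hBne
    rw [Finset.mem_filter] at hwmem
    obtain ⟨hwB, hwc⟩ := hwmem
    refine ⟨w + 1, ?_⟩
    have hset : B.filter (· < w + 1) = insert w (B.filter (· < c)) := by
      ext i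
      simp only [Finset.mem_filter, Finset.mem_insert]
      constructor
      · rintro ⟨hiB, hi⟩
        by_cases h : i < c
        · exact Or.inr ⟨hiB, h⟩
        · left
          have : w ≤ i := Finset.min'_le _ i (Finset.mem_filter.2 ⟨hiB, h⟩)
          omega
      · rintro (rfl | ⟨hiB, hi⟩)
        · exact ⟨hwB, Nat.lt_succ_self _⟩
        · exact ⟨hiB, by omega⟩
    rw [hset, Finset.card_insert_of_notMem, hc]
    intro h
    exact hwc (Finset.mem_filter.1 h).2

/-- Splitting a cut into a smaller cut and an interval block. -/
lemma stmt1_split {M : Type*} [AddCommGroup M] (B : Finset ℕ) (g : ℕ → M) {c c' : ℕ}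
    (h : c ≤ c') :
    ∑ i ∈ B.filter (· < c'), g i
      = ∑ i ∈ B.filter (· < c), g i + ∑ i ∈ B.filter (fun i => c ≤ i ∧ i < c'), g i := by
  have hdisj : Disjoint (B.filter (· < c)) (B.filter (fun i => c ≤ i ∧ i < c')) := by
    rw [Finset.disjoint_left]
    intro i h1 h2
    rw [Finset.mem_filter] at h1 h2
    omega
  rw [← Finset.sum_union hdisj]
  refine Finset.sum_congr ?_ fun _ _ => rfl
  ext i
  simp only [Finset.mem_union, Finset.mem_filter]
  by_cases hiB : i ∈ B <;> simp [hiB] <;> omega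

lemma stmt1_split_card (B : Finset ℕ) {c c' : ℕ} (h : c ≤ c') :
    (B.filter (· < c')).card
      = (B.filter (· < c)).card + (B.filter (fun i => c ≤ i ∧ i < c')).card := by
  have hdisj : Disjoint (B.filter (· < c)) (B.filter (fun i => c ≤ i ∧ i < c')) := by
    rw [Finset.disjoint_left]
    intro i h1 h2
    rw [Finset.mem_filter] at h1 h2
    omega
  rw [← Finset.card_union_of_disjoint hdisj]
  congr 1
  ext i
  simp only [Finset.mem_union, Finset.mem_filter]
  by_cases hiB : i ∈ B <;> simp [hiB] <;> omega

end Aux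

set_option maxHeartbeats 2000000 in
/-- For a sequence with `l`-bounded gaps and a Schauder basis with basis
constant `K`, the `n`-UL property with constants `C₁, C₂` implies the UL property (for all
finite sets) with constants `max (n₁α₁α₂) (K²C₁ + 2(l-1)C₁K)` and
`max (n₁α₁α₂) (K²C₂ + 2(l-1)C₂K)`. -/
theorem stmt1
    {X : Type*} [NormedAddCommGroup X] [NormedSpace ℝ X]
    (e : ℕ → X) (f : ℕ → X →L[ℝ] ℝ)
    (hbi : ∀ i j, f i (e j) = if i = j then (1 : ℝ) else 0)
    (α₁ α₂ : ℝ) (hα₁pos : 0 < α₁) (hα₂pos : 0 < α₂)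
    (hα₁ : ∀ i, ‖e i‖ ≤ α₁) (hα₂ : ∀ i, ‖f i‖ ≤ α₂)
    (K : ℝ) (hKpos : 0 < K)
    (hSch : ∀ (x : X) (m : ℕ), ‖∑ i ∈ Finset.range m, f i x • e i‖ ≤ K * ‖x‖)
    (nseq : ℕ → ℕ) (hmono : StrictMono nseq) (hn1 : 0 < nseq 0)
    (l : ℕ) (hl : 2 ≤ l) (hgaps : ∀ k, nseq (k + 1) ≤ l * nseq k)
    (C₁ C₂ : ℝ) (hC₁ : 0 < C₁) (hC₂ : 0 < C₂)
    (hUL : ∀ (A : Finset ℕ) (hA : A.Nonempty) (a : ℕ → ℝ), (∃ k, A.card = nseq k) →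
      C₁⁻¹ * (A.inf' hA fun i => |a i|) * ‖∑ i ∈ A, e i‖ ≤ ‖∑ i ∈ A, a i • e i‖ ∧
      ‖∑ i ∈ A, a i • e i‖ ≤ C₂ * (A.sup' hA fun i => |a i|) * ‖∑ i ∈ A, e i‖) :
    ∀ (A : Finset ℕ) (hA : A.Nonempty) (a : ℕ → ℝ),
      (max ((nseq 0 : ℝ) * α₁ * α₂) (K ^ 2 * C₁ + 2 * ((l : ℝ) - 1) * C₁ * K))⁻¹ *
          (A.inf' hA fun i => |a i|) * ‖∑ i ∈ A, e i‖ ≤ ‖∑ i ∈ A, a i • e i‖ ∧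
      ‖∑ i ∈ A, a i • e i‖ ≤
        max ((nseq 0 : ℝ) * α₁ * α₂) (K ^ 2 * C₂ + 2 * ((l : ℝ) - 1) * C₂ * K) *
          (A.sup' hA fun i => |a i|) * ‖∑ i ∈ A, e i‖ := by
  intro A hA a
  set M₁ := max ((nseq 0 : ℝ) * α₁ * α₂) (K ^ 2 * C₁ + 2 * ((l : ℝ) - 1) * C₁ * K) with hM₁
  set M₂ := max ((nseq 0 : ℝ) * α₁ * α₂) (K ^ 2 * C₂ + 2 * ((l : ℝ) - 1) * C₂ * K) with hM₂
  set x := ∑ i ∈ A, a i • e i with hx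
  set S := ∑ i ∈ A, e i with hS
  set inf := A.inf' hA fun i => |a i| with hinf
  set sup := A.sup' hA fun i => |a i| with hsup
  -- basic positivity facts
  have hn0R : (0 : ℝ) < (nseq 0 : ℕ) := by exact_mod_cast hn1
  have hM₁pos : 0 < M₁ :=
    lt_of_lt_of_le (mul_pos (mul_pos hn0R hα₁pos) hα₂pos) (le_max_left _ _)
  have hinf0 : 0 ≤ inf := Finset.le_inf' hA _ fun i _ => abs_nonneg _
  have hsup0 : 0 ≤ sup := by
    obtain ⟨i₀, hi₀⟩ := hA
    exact le_trans (abs_nonneg (a i₀)) (Finset.le_sup' (fun i => |a i|) hi₀)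
  have hK1 : 1 ≤ K := by
    have he0 : e 0 ≠ 0 := by
      intro h
      have h2 := hbi 0 0
      rw [h] at h2
      simp at h2
    have h1 := hSch (e 0) 1
    rw [Finset.sum_range_one, hbi, if_pos rfl, one_smul] at h1
    have h2 : 0 < ‖e 0‖ := norm_pos_iff.2 he0
    nlinarith
  have hSnorm : (1 : ℝ) ≤ α₂ * ‖S‖ := by
    obtain ⟨i₀, hi₀⟩ := hA
    have h1 : f i₀ S = 1 := by
      have h2 : (∑ i ∈ A, e i) = ∑ i ∈ A, (fun _ => (1:ℝ)) i • e i := by simp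
      rw [hS, h2, stmt1_coef e f hbi, if_pos hi₀]
    have h3 : ‖f i₀ S‖ ≤ ‖f i₀‖ * ‖S‖ := (f i₀).le_opNorm S
    rw [h1] at h3
    simp only [norm_one] at h3
    calc (1:ℝ) ≤ ‖f i₀‖ * ‖S‖ := h3
      _ ≤ α₂ * ‖S‖ := mul_le_mul_of_nonneg_right (hα₂ i₀) (norm_nonneg _)
  -- the two main estimates
  have main : ‖x‖ ≤ M₂ * sup * ‖S‖ ∧ inf * ‖S‖ ≤ M₁ * ‖x‖ := by
    by_cases hc : nseq 0 ≤ A.card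
    · -- main case: large sets, block decomposition
      -- find k with nseq k ≤ |A| < nseq (k+1)
      have hfind : ∃ k, A.card < nseq (k + 1) := by
        refine ⟨A.card, lt_of_lt_of_le (Nat.lt_succ_self _) ?_⟩
        exact hmono.le_apply
      set k := Nat.find hfind with hk
      have hk2 : A.card < nseq (k + 1) := Nat.find_spec hfind
      have hk1 : nseq k ≤ A.card := by
        rcases Nat.eq_zero_or_pos k with h0 | h0
        · rw [h0]; exact hc
        · by_contra h
          have hlt : k - 1 < Nat.find hfind := by rw [← hk]; omega
          have hmin := Nat.find_min hfind hlt
          have hkk : k - 1 + 1 = k := by omega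
          rw [hkk] at hmin
          omega
      set N := nseq k with hN
      have hN1 : 1 ≤ N := le_trans hn1 (hmono.monotone (Nat.zero_le k))
      have hml : A.card < l * N := lt_of_lt_of_le hk2 (hgaps k)
      set q := A.card / N with hq
      set r := A.card % N with hr
      have hrN : r < N := Nat.mod_lt _ (by omega)
      have hql : q + 1 ≤ l := by
        have h1 : q * N ≤ A.card := Nat.div_mul_le_self _ _
        by_contra h
        have h2 : l ≤ q := by omega
        have : l * N ≤ q * N := Nat.mul_le_mul_right _ h2
        omega
      -- projection estimates relative to A
      have hPa : ∀ (b : ℕ → ℝ) (m : ℕ),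
          ‖∑ i ∈ A.filter (· < m), b i • e i‖ ≤ K * ‖∑ i ∈ A, b i • e i‖ := by
        intro b m
        rw [← stmt1_proj e f hbi A b m]
        exact hSch _ m
      have hP1 : ∀ m : ℕ, ‖∑ i ∈ A.filter (· < m), e i‖ ≤ K * ‖S‖ := by
        intro m
        have h := hPa (fun _ => 1) m
        simp only [one_smul] at h
        rw [hS]
        exact h
      have hPax : ∀ m : ℕ, ‖∑ i ∈ A.filter (· < m), a i • e i‖ ≤ K * ‖x‖ := by
        intro m; rw [hx]; exact hPa a m
      -- the key induction on the number of full blocks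
      have key : ∀ q' c, (A.filter (· < c)).card = r + q' * N →
          ‖∑ i ∈ A.filter (· < c), a i • e i‖ ≤ (K ^ 2 + 2 * q' * K) * (C₂ * (sup * ‖S‖)) ∧
          inf * ‖∑ i ∈ A.filter (· < c), e i‖ ≤ (K ^ 2 + 2 * q' * K) * (C₁ * ‖x‖) := by
        intro q'
        induction q' with
        | zero =>
          intro c hcard
          simp only [Nat.mul_zero, Nat.zero_mul, Nat.add_zero] at hcard
          have hco : (0:ℝ) ≤ K ^ 2 + 2 * (0:ℕ) * K := by
            push_cast
            nlinarith
          by_cases hr0 : r = 0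
          · have hempty : A.filter (· < c) = ∅ := by
              rw [← Finset.card_eq_zero, hcard, hr0]
            rw [hempty]
            simp only [Finset.sum_empty, norm_zero, mul_zero]
            constructor
            · exact mul_nonneg hco (mul_nonneg hC₂.le (mul_nonneg hsup0 (norm_nonneg _)))
            · exact mul_nonneg hco (mul_nonneg hC₁.le (norm_nonneg _))
          · -- pad the partial block inside the first N elements
            obtain ⟨cN, hcN⟩ := stmt1_cut A N (le_trans hk1 (le_refl _))
            have hEne : (A.filter (· < cN)).Nonempty := by
              rw [← Finset.card_pos, hcN]; omega
            have hEsub : A.filter (· < cN) ⊆ A := Finset.filter_subset _ _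
            have hccN : c ≤ cN := by
              by_contra h
              have hsub : A.filter (· < cN) ⊆ A.filter (· < c) := by
                intro i hi
                rw [Finset.mem_filter] at hi ⊢
                exact ⟨hi.1, by omega⟩
              have := Finset.card_le_card hsub
              omega
            have hRE : A.filter (· < c) = (A.filter (· < cN)).filter (· < c) := by
              ext i
              simp only [Finset.mem_filter]
              constructor
              · rintro ⟨h1, h2⟩; exact ⟨⟨h1, lt_of_lt_of_le h2 hccN⟩, h2⟩
              · rintro ⟨⟨h1, _⟩, h2⟩; exact ⟨h1, h2⟩
            have hULE := hUL (A.filter (· < cN)) hEne a ⟨k, hcN⟩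
            -- norm of the partial block, as a projection of the E-block
            have hprojE : ∀ b : ℕ → ℝ,
                ‖∑ i ∈ (A.filter (· < cN)).filter (· < c), b i • e i‖
                  ≤ K * ‖∑ i ∈ A.filter (· < cN), b i • e i‖ := by
              intro b
              rw [← stmt1_proj e f hbi (A.filter (· < cN)) b c]
              exact hSch _ c
            have hsupE : (A.filter (· < cN)).sup' hEne (fun i => |a i|) ≤ sup :=
              Finset.sup'_mono _ hEsub hEne
            have hinfE : inf ≤ (A.filter (· < cN)).inf' hEne (fun i => |a i|) :=
              Finset.inf'_mono _ hEsub hEne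
            have h1E : ‖∑ i ∈ A.filter (· < cN), e i‖ ≤ K * ‖S‖ := hP1 cN
            have h1Enn : (0:ℝ) ≤ ‖∑ i ∈ A.filter (· < cN), e i‖ := norm_nonneg _
            have hsupEnn : (0:ℝ) ≤ (A.filter (· < cN)).sup' hEne (fun i => |a i|) := by
              obtain ⟨i₀, hi₀⟩ := hEne
              exact le_trans (abs_nonneg (a i₀)) (Finset.le_sup' (fun i => |a i|) hi₀)
            have hULE2 : ‖∑ i ∈ A.filter (· < cN), a i • e i‖
                ≤ C₂ * ((A.filter (· < cN)).sup' hEne (fun i => |a i|) *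
                    ‖∑ i ∈ A.filter (· < cN), e i‖) := by
              rw [← mul_assoc]
              exact hULE.2
            constructor
            · -- upper estimate for the partial block
              rw [hRE]
              calc ‖∑ i ∈ (A.filter (· < cN)).filter (· < c), a i • e i‖
                  ≤ K * ‖∑ i ∈ A.filter (· < cN), a i • e i‖ := hprojE a
                _ ≤ K * (C₂ * ((A.filter (· < cN)).sup' hEne (fun i => |a i|) *
                      ‖∑ i ∈ A.filter (· < cN), e i‖)) :=
                    mul_le_mul_of_nonneg_left hULE2 hKpos.le
                _ ≤ K * (C₂ * (sup * (K * ‖S‖))) := by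
                    refine mul_le_mul_of_nonneg_left (mul_le_mul_of_nonneg_left ?_ hC₂.le) hKpos.le
                    exact mul_le_mul hsupE h1E h1Enn hsup0
                _ ≤ (K ^ 2 + 2 * (0:ℕ) * K) * (C₂ * (sup * ‖S‖)) := by
                    push_cast
                    nlinarith [mul_nonneg hsup0 (norm_nonneg S), hC₂.le]
            · -- lower estimate for the partial block
              rw [hRE]
              have hproj1 : ‖∑ i ∈ (A.filter (· < cN)).filter (· < c), e i‖
                  ≤ K * ‖∑ i ∈ A.filter (· < cN), e i‖ := by
                have h := hprojE (fun _ => 1)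
                simpa using h
              have hULE1 : (A.filter (· < cN)).inf' hEne (fun i => |a i|) *
                  ‖∑ i ∈ A.filter (· < cN), e i‖ ≤ C₁ * ‖∑ i ∈ A.filter (· < cN), a i • e i‖ := by
                have h := hULE.1
                have heq : (A.filter (· < cN)).inf' hEne (fun i => |a i|) *
                    ‖∑ i ∈ A.filter (· < cN), e i‖
                    = C₁ * (C₁⁻¹ * (A.filter (· < cN)).inf' hEne (fun i => |a i|) *
                        ‖∑ i ∈ A.filter (· < cN), e i‖) := by
                  rw [← mul_assoc, ← mul_assoc, mul_inv_cancel₀ hC₁.ne', one_mul]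
                rw [heq]
                exact mul_le_mul_of_nonneg_left h hC₁.le
              have hEx : ‖∑ i ∈ A.filter (· < cN), a i • e i‖ ≤ K * ‖x‖ := hPax cN
              calc inf * ‖∑ i ∈ (A.filter (· < cN)).filter (· < c), e i‖
                  ≤ inf * (K * ‖∑ i ∈ A.filter (· < cN), e i‖) :=
                    mul_le_mul_of_nonneg_left hproj1 hinf0
                _ = K * (inf * ‖∑ i ∈ A.filter (· < cN), e i‖) := by ring
                _ ≤ K * ((A.filter (· < cN)).inf' hEne (fun i => |a i|) *
                      ‖∑ i ∈ A.filter (· < cN), e i‖) := by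
                    refine mul_le_mul_of_nonneg_left ?_ hKpos.le
                    exact mul_le_mul_of_nonneg_right hinfE h1Enn
                _ ≤ K * (C₁ * ‖∑ i ∈ A.filter (· < cN), a i • e i‖) :=
                    mul_le_mul_of_nonneg_left hULE1 hKpos.le
                _ ≤ K * (C₁ * (K * ‖x‖)) := by
                    refine mul_le_mul_of_nonneg_left (mul_le_mul_of_nonneg_left hEx hC₁.le) hKpos.le
                _ ≤ (K ^ 2 + 2 * (0:ℕ) * K) * (C₁ * ‖x‖) := by
                    push_cast
                    nlinarith [norm_nonneg x, hC₁.le]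
        | succ q' ih =>
          intro c hcard
          have hmul : (q' + 1) * N = q' * N + N := Nat.succ_mul _ _
          -- find the cut c₀ for the first r + q' * N elements
          have hle : r + q' * N ≤ A.card := by
            have h1 : (A.filter (· < c)).card ≤ A.card := Finset.card_le_card (Finset.filter_subset _ _)
            omega
          obtain ⟨c₀, hc₀⟩ := stmt1_cut A (r + q' * N) hle
          have hc₀c : c₀ ≤ c := by
            by_contra h
            have hsub : A.filter (· < c) ⊆ A.filter (· < c₀) := by
              intro i hi
              rw [Finset.mem_filter] at hi ⊢
              exact ⟨hi.1, by omega⟩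
            have hcc := Finset.card_le_card hsub
            omega
          -- the block B of size N
          have hBcard : (A.filter (fun i => c₀ ≤ i ∧ i < c)).card = N := by
            have hsc := stmt1_split_card A hc₀c
            omega
          have hBne : (A.filter (fun i => c₀ ≤ i ∧ i < c)).Nonempty := by
            rw [← Finset.card_pos, hBcard]; omega
          have hBsub : A.filter (fun i => c₀ ≤ i ∧ i < c) ⊆ A := Finset.filter_subset _ _
          have hULB := hUL (A.filter (fun i => c₀ ≤ i ∧ i < c)) hBne a ⟨k, hBcard⟩
          obtain ⟨ihU, ihL⟩ := ih c₀ hc₀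
          -- interval norms
          have hBsum : ∀ b : ℕ → ℝ,
              ∑ i ∈ A.filter (fun i => c₀ ≤ i ∧ i < c), b i • e i
                = ∑ i ∈ A.filter (· < c), b i • e i - ∑ i ∈ A.filter (· < c₀), b i • e i := by
            intro b
            rw [stmt1_split A (fun i => b i • e i) hc₀c]
            abel
          have hBx : ‖∑ i ∈ A.filter (fun i => c₀ ≤ i ∧ i < c), a i • e i‖ ≤ 2 * K * ‖x‖ := by
            rw [hBsum a]
            calc ‖∑ i ∈ A.filter (· < c), a i • e i - ∑ i ∈ A.filter (· < c₀), a i • e i‖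
                ≤ ‖∑ i ∈ A.filter (· < c), a i • e i‖ + ‖∑ i ∈ A.filter (· < c₀), a i • e i‖ :=
                  norm_sub_le _ _
              _ ≤ K * ‖x‖ + K * ‖x‖ := add_le_add (hPax c) (hPax c₀)
              _ = 2 * K * ‖x‖ := by ring
          have hB1 : ‖∑ i ∈ A.filter (fun i => c₀ ≤ i ∧ i < c), e i‖ ≤ 2 * K * ‖S‖ := by
            have h := hBsum (fun _ => 1)
            simp only [one_smul] at h
            rw [h]
            calc ‖∑ i ∈ A.filter (· < c), e i - ∑ i ∈ A.filter (· < c₀), e i‖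
                ≤ ‖∑ i ∈ A.filter (· < c), e i‖ + ‖∑ i ∈ A.filter (· < c₀), e i‖ :=
                  norm_sub_le _ _
              _ ≤ K * ‖S‖ + K * ‖S‖ := add_le_add (hP1 c) (hP1 c₀)
              _ = 2 * K * ‖S‖ := by ring
          have hsupB : (A.filter (fun i => c₀ ≤ i ∧ i < c)).sup' hBne (fun i => |a i|) ≤ sup :=
            Finset.sup'_mono _ hBsub hBne
          have hinfB : inf ≤ (A.filter (fun i => c₀ ≤ i ∧ i < c)).inf' hBne (fun i => |a i|) :=
            Finset.inf'_mono _ hBsub hBne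
          have h1Bnn : (0:ℝ) ≤ ‖∑ i ∈ A.filter (fun i => c₀ ≤ i ∧ i < c), e i‖ := norm_nonneg _
          constructor
          · -- upper estimate
            have hsplit := stmt1_split A (fun i => a i • e i) hc₀c
            calc ‖∑ i ∈ A.filter (· < c), a i • e i‖
                ≤ ‖∑ i ∈ A.filter (· < c₀), a i • e i‖ +
                    ‖∑ i ∈ A.filter (fun i => c₀ ≤ i ∧ i < c), a i • e i‖ := by
                  rw [hsplit]; exact norm_add_le _ _
              _ ≤ (K ^ 2 + 2 * q' * K) * (C₂ * (sup * ‖S‖)) +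
                    C₂ * ((A.filter (fun i => c₀ ≤ i ∧ i < c)).sup' hBne (fun i => |a i|) *
                      ‖∑ i ∈ A.filter (fun i => c₀ ≤ i ∧ i < c), e i‖) := by
                  refine add_le_add ihU ?_
                  rw [← mul_assoc]
                  exact hULB.2
              _ ≤ (K ^ 2 + 2 * q' * K) * (C₂ * (sup * ‖S‖)) + C₂ * (sup * (2 * K * ‖S‖)) := by
                  refine add_le_add_right (mul_le_mul_of_nonneg_left ?_ hC₂.le) _
                  exact mul_le_mul hsupB hB1 h1Bnn hsup0
              _ ≤ (K ^ 2 + 2 * (q' + 1 : ℕ) * K) * (C₂ * (sup * ‖S‖)) := by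
                  push_cast
                  nlinarith [mul_nonneg hsup0 (norm_nonneg S), hC₂.le, hKpos.le]
          · -- lower estimate
            have hsplit := stmt1_split A e hc₀c
            have hULB1 : (A.filter (fun i => c₀ ≤ i ∧ i < c)).inf' hBne (fun i => |a i|) *
                ‖∑ i ∈ A.filter (fun i => c₀ ≤ i ∧ i < c), e i‖
                ≤ C₁ * ‖∑ i ∈ A.filter (fun i => c₀ ≤ i ∧ i < c), a i • e i‖ := by
              have h := hULB.1
              have heq : (A.filter (fun i => c₀ ≤ i ∧ i < c)).inf' hBne (fun i => |a i|) *
                  ‖∑ i ∈ A.filter (fun i => c₀ ≤ i ∧ i < c), e i‖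
                  = C₁ * (C₁⁻¹ * (A.filter (fun i => c₀ ≤ i ∧ i < c)).inf' hBne (fun i => |a i|) *
                      ‖∑ i ∈ A.filter (fun i => c₀ ≤ i ∧ i < c), e i‖) := by
                rw [← mul_assoc, ← mul_assoc, mul_inv_cancel₀ hC₁.ne', one_mul]
              rw [heq]
              exact mul_le_mul_of_nonneg_left h hC₁.le
            calc inf * ‖∑ i ∈ A.filter (· < c), e i‖
                ≤ inf * (‖∑ i ∈ A.filter (· < c₀), e i‖ +
                    ‖∑ i ∈ A.filter (fun i => c₀ ≤ i ∧ i < c), e i‖) := by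
                  refine mul_le_mul_of_nonneg_left ?_ hinf0
                  rw [hsplit]; exact norm_add_le _ _
              _ = inf * ‖∑ i ∈ A.filter (· < c₀), e i‖ +
                    inf * ‖∑ i ∈ A.filter (fun i => c₀ ≤ i ∧ i < c), e i‖ := by ring
              _ ≤ (K ^ 2 + 2 * q' * K) * (C₁ * ‖x‖) +
                    (A.filter (fun i => c₀ ≤ i ∧ i < c)).inf' hBne (fun i => |a i|) *
                      ‖∑ i ∈ A.filter (fun i => c₀ ≤ i ∧ i < c), e i‖ :=
                  add_le_add ihL (mul_le_mul_of_nonneg_right hinfB h1Bnn)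
              _ ≤ (K ^ 2 + 2 * q' * K) * (C₁ * ‖x‖) +
                    C₁ * ‖∑ i ∈ A.filter (fun i => c₀ ≤ i ∧ i < c), a i • e i‖ :=
                  add_le_add_right hULB1 _
              _ ≤ (K ^ 2 + 2 * q' * K) * (C₁ * ‖x‖) + C₁ * (2 * K * ‖x‖) :=
                  add_le_add_right (mul_le_mul_of_nonneg_left hBx hC₁.le) _
              _ ≤ (K ^ 2 + 2 * (q' + 1 : ℕ) * K) * (C₁ * ‖x‖) := by
                  push_cast
                  nlinarith [norm_nonneg x, hC₁.le, hKpos.le]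
      -- apply with the full set
      have hfilter_all : A.filter (· < A.max' hA + 1) = A := by
        refine Finset.filter_true_of_mem fun i hi => ?_
        exact Nat.lt_succ_of_le (Finset.le_max' A i hi)
      have hcard_all : (A.filter (· < A.max' hA + 1)).card = r + q * N := by
        rw [hfilter_all, hr, hq]
        exact (Nat.mod_add_div' A.card N).symm
      obtain ⟨hU', hL'⟩ := key q (A.max' hA + 1) hcard_all
      rw [hfilter_all] at hU' hL'
      replace hU' : ‖x‖ ≤ (K ^ 2 + 2 * q * K) * (C₂ * (sup * ‖S‖)) := hU'
      replace hL' : inf * ‖S‖ ≤ (K ^ 2 + 2 * q * K) * (C₁ * ‖x‖) := hL'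
      have hqlR : (q : ℝ) ≤ (l : ℝ) - 1 := by
        have : ((q : ℝ) + 1) ≤ (l : ℝ) := by exact_mod_cast hql
        linarith
      constructor
      · have hcoef : (K ^ 2 + 2 * q * K) * C₂ ≤ M₂ := by
          have h1 : K ^ 2 * C₂ + 2 * ((l : ℝ) - 1) * C₂ * K ≤ M₂ := le_max_right _ _
          nlinarith [mul_nonneg (mul_nonneg (sub_nonneg.2 hqlR) hKpos.le) hC₂.le]
        calc ‖x‖ ≤ (K ^ 2 + 2 * q * K) * (C₂ * (sup * ‖S‖)) := hU'
          _ = ((K ^ 2 + 2 * q * K) * C₂) * (sup * ‖S‖) := by ring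
          _ ≤ M₂ * (sup * ‖S‖) :=
              mul_le_mul_of_nonneg_right hcoef (mul_nonneg hsup0 (norm_nonneg _))
          _ = M₂ * sup * ‖S‖ := by ring
      · have hcoef : (K ^ 2 + 2 * q * K) * C₁ ≤ M₁ := by
          have h1 : K ^ 2 * C₁ + 2 * ((l : ℝ) - 1) * C₁ * K ≤ M₁ := le_max_right _ _
          nlinarith [mul_nonneg (mul_nonneg (sub_nonneg.2 hqlR) hKpos.le) hC₁.le]
        calc inf * ‖S‖ ≤ (K ^ 2 + 2 * q * K) * (C₁ * ‖x‖) := hL'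
          _ = ((K ^ 2 + 2 * q * K) * C₁) * ‖x‖ := by ring
          _ ≤ M₁ * ‖x‖ := mul_le_mul_of_nonneg_right hcoef (norm_nonneg _)
    · -- crude case: small sets
      push_neg at hc
      have hmR : (A.card : ℝ) ≤ (nseq 0 : ℕ) := by exact_mod_cast hc.le
      constructor
      · -- upper
        have h1 : ‖x‖ ≤ (A.card : ℝ) * (sup * α₁) := by
          rw [hx]
          calc ‖∑ i ∈ A, a i • e i‖ ≤ ∑ i ∈ A, ‖a i • e i‖ := norm_sum_le _ _
            _ ≤ A.card • (sup * α₁) := by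
                refine Finset.sum_le_card_nsmul _ _ _ fun i hi => ?_
                rw [norm_smul, Real.norm_eq_abs]
                exact mul_le_mul (Finset.le_sup' (fun i => |a i|) hi) (hα₁ i) (norm_nonneg _) hsup0
            _ = (A.card : ℝ) * (sup * α₁) := nsmul_eq_mul _ _
        have h2 : ‖x‖ ≤ (nseq 0 : ℝ) * (sup * α₁) :=
          le_trans h1 (mul_le_mul_of_nonneg_right hmR (mul_nonneg hsup0 hα₁pos.le))
        have h3 : ‖x‖ ≤ ((nseq 0 : ℝ) * (sup * α₁)) * (α₂ * ‖S‖) := by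
          calc ‖x‖ ≤ (nseq 0 : ℝ) * (sup * α₁) := h2
            _ = ((nseq 0 : ℝ) * (sup * α₁)) * 1 := (mul_one _).symm
            _ ≤ ((nseq 0 : ℝ) * (sup * α₁)) * (α₂ * ‖S‖) := by
                refine mul_le_mul_of_nonneg_left hSnorm ?_
                exact mul_nonneg hn0R.le (mul_nonneg hsup0 hα₁pos.le)
        have h4 : ((nseq 0 : ℝ) * (sup * α₁)) * (α₂ * ‖S‖)
            = ((nseq 0 : ℝ) * α₁ * α₂) * (sup * ‖S‖) := by ring
        rw [h4] at h3
        calc ‖x‖ ≤ ((nseq 0 : ℝ) * α₁ * α₂) * (sup * ‖S‖) := h3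
          _ ≤ M₂ * (sup * ‖S‖) :=
              mul_le_mul_of_nonneg_right (le_max_left _ _) (mul_nonneg hsup0 (norm_nonneg _))
          _ = M₂ * sup * ‖S‖ := by ring
      · -- lower
        obtain ⟨i₀, hi₀⟩ := hA
        have hfi₀ : f i₀ x = a i₀ := by
          rw [hx, stmt1_coef e f hbi, if_pos hi₀]
        have h1 : inf ≤ α₂ * ‖x‖ := by
          calc inf ≤ |a i₀| := Finset.inf'_le _ hi₀
            _ = ‖f i₀ x‖ := by rw [hfi₀, Real.norm_eq_abs]
            _ ≤ ‖f i₀‖ * ‖x‖ := (f i₀).le_opNorm x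
            _ ≤ α₂ * ‖x‖ := mul_le_mul_of_nonneg_right (hα₂ i₀) (norm_nonneg _)
        have h2 : ‖S‖ ≤ (nseq 0 : ℝ) * α₁ := by
          calc ‖S‖ ≤ ∑ i ∈ A, ‖e i‖ := by rw [hS]; exact norm_sum_le _ _
            _ ≤ A.card • α₁ := Finset.sum_le_card_nsmul _ _ _ fun i _ => hα₁ i
            _ = (A.card : ℝ) * α₁ := nsmul_eq_mul _ _
            _ ≤ (nseq 0 : ℝ) * α₁ := mul_le_mul_of_nonneg_right hmR hα₁pos.le
        calc inf * ‖S‖ ≤ (α₂ * ‖x‖) * ((nseq 0 : ℝ) * α₁) :=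
            mul_le_mul h1 h2 (norm_nonneg _) (mul_nonneg hα₂pos.le (norm_nonneg _))
          _ = ((nseq 0 : ℝ) * α₁ * α₂) * ‖x‖ := by ring
          _ ≤ M₁ * ‖x‖ := mul_le_mul_of_nonneg_right (le_max_left _ _) (norm_nonneg _)
  obtain ⟨hU, hL⟩ := main
  constructor
  · rw [mul_assoc]
    calc M₁⁻¹ * (inf * ‖S‖) ≤ M₁⁻¹ * (M₁ * ‖x‖) :=
        mul_le_mul_of_nonneg_left hL (inv_nonneg.2 hM₁pos.le)
      _ = ‖x‖ := inv_mul_cancel_left₀ hM₁pos.ne' _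
  · exact hU
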